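/- As linear operators on Λ_{2n}, ∂_{θ_{2n}} ∘ ∂_{θ_{2n−1}} ∘ ⋯ ∘ ∂_{θ_1} = ((−1)^n/(4^n·n!))·Δ_f^n; that is, the Berezin integral (extraction of the coefficient of θ_1⋯θ_{2n}) equals ((−1)^n/(4^n n!)) times the n-th power of the fermionic Laplacian. -/

import Mathlib

/-!
STATEMENT 14: As linear operators on Λ_{2n},
∂_{θ_{2n}} ∘ ⋯ ∘ ∂_{θ_1} = ((−1)^n/(4^n·n!))·Δ_f^n,
i.e. the Berezin integral equals ((−1)^n/(4^n n!)) times the n-th power of the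
fermionic Laplacian.
-/

noncomputable section

namespace SuperCauchy


section Aux
set_option linter.unusedSectionVars false

variable {R : Type*} [Ring R] [Algebra ℝ R]

lemma foldl_mul_eq (l : List R) (x : R) :
    l.foldl (fun acc f => f * acc) x = l.reverse.prod * x := by
  induction l generalizing x with
  | nil => simp
  | cons a l ih => simp [ih, mul_assoc]

lemma move_past (d : ℕ → R) (h : ∀ i j, d i * d j = -(d j * d i)) (m : ℕ) :
    ∀ l : List ℕ, d m * (l.map d).prod = ((-1:ℝ)^l.length) • ((l.map d).prod * d m) := by
  intro l
  induction l with
  | nil => simp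
  | cons a l ih =>
      simp only [List.map_cons, List.prod_cons, List.length_cons]
      rw [← mul_assoc, h m a, neg_mul, mul_assoc, ih, pow_succ]
      rw [mul_smul_comm, ← neg_smul, mul_assoc]
      congr 1
      ring

/-- reversing a product of anticommuting elements. -/
lemma reverse_prod (d : ℕ → R) (h : ∀ i j, d i * d j = -(d j * d i)) (k : ℕ) :
    (((List.range k).map d).reverse).prod
      = ((-1:ℝ)^(k.choose 2)) • ((List.range k).map d).prod := by
  induction k with
  | zero => simp
  | succ k ih =>
      rw [List.range_succ]
      simp only [List.map_append, List.reverse_append, List.map_cons, List.map_nil,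
        List.reverse_cons, List.reverse_nil, List.nil_append, List.prod_cons,
        List.prod_append, List.prod_nil, mul_one]
      rw [ih, mul_smul_comm, move_past d h k (List.range k), List.length_range,
        smul_smul, ← pow_add]
      congr 2
      rw [Nat.choose_succ_succ, Nat.choose_one_right, Nat.add_comm]

section sumpow
variable (f : ℕ → R) (hcomm : ∀ i j, Commute (f i) (f j)) (hsq : ∀ i, f i * f i = 0)
include hcomm hsq

omit hcomm in
lemma fpow_zero {i e : ℕ} (he : 2 ≤ e) : f i ^ e = 0 := by
  obtain ⟨e', rfl⟩ : ∃ e', e = e' + 2 := ⟨e - 2, by omega⟩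
  rw [pow_add, pow_two, hsq, mul_zero]

lemma sum_pow_zero : ∀ k m : ℕ, k < m → (∑ j ∈ Finset.range k, f j) ^ m = 0 := by
  intro k
  induction k with
  | zero => intro m hm; simp [zero_pow (by omega : m ≠ 0)]
  | succ k ih =>
      intro m hm
      rw [Finset.sum_range_succ]
      have hc : Commute (∑ j ∈ Finset.range k, f j) (f k) :=
        (Commute.sum_left _ _ _ (fun i _ => hcomm i k))
      rw [hc.add_pow]
      apply Finset.sum_eq_zero
      intro i hi
      simp only [Finset.mem_range] at hi
      by_cases h2 : m - i ≥ 2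
      · rw [fpow_zero f hsq h2, mul_zero, zero_mul]
      · have hik : k < i := by omega
        rw [ih i hik, zero_mul, zero_mul]

lemma sum_pow_eq : ∀ k : ℕ, (∑ j ∈ Finset.range k, f j) ^ k
    = k.factorial • ((List.range k).map f).prod := by
  intro k
  induction k with
  | zero => simp
  | succ k ih =>
      rw [Finset.sum_range_succ]
      have hc : Commute (∑ j ∈ Finset.range k, f j) (f k) :=
        (Commute.sum_left _ _ _ (fun i _ => hcomm i k))
      rw [hc.add_pow]
      have : ∀ i ∈ Finset.range (k + 2), (∑ j ∈ Finset.range k, f j) ^ i * f k ^ (k + 1 - i)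
          * (Nat.choose (k+1) i : R)
          = if i = k then (k+1).factorial • (((List.range k).map f).prod * f k) else 0 := by
        intro i hi
        simp only [Finset.mem_range] at hi
        rcases lt_trichotomy i k with h | heq | h
        · rw [fpow_zero f hsq (by omega), mul_zero, zero_mul, if_neg (by omega)]
        · subst heq
          rw [if_pos rfl]
          have h1 : i + 1 - i = 1 := by omega
          rw [h1, pow_one, ih, Nat.choose_succ_self_right, smul_mul_assoc, smul_mul_assoc,
            ← (Nat.cast_commute (i+1) ((List.map f (List.range i)).prod * f i)).eq,
            ← nsmul_eq_mul, smul_smul, Nat.factorial_succ, Nat.mul_comm]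
        · have hik : i = k + 1 := by omega
          subst hik
          rw [sum_pow_zero f hcomm hsq k (k+1) (by omega), zero_mul, zero_mul,
            if_neg (by omega)]
      rw [Finset.sum_congr rfl this, Finset.sum_ite_eq' (Finset.range (k+2)) k, if_pos (by simp)]
      rw [List.range_succ]
      simp [List.prod_append]

end sumpow
end Aux

/-- The Grassmann algebra Λ_{2n}, realized as the exterior algebra on 2n generators. -/
abbrev Λ (n : ℕ) : Type := ExteriorAlgebra ℝ (Fin (2*n) → ℝ)

/-- The Grassmann generator θ_j (0-based index j corresponds to θ_{j+1}). -/
def θ {n : ℕ} (j : Fin (2*n)) : Λ n := ExteriorAlgebra.ι ℝ (Pi.single j 1)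

/-- The odd left derivation ∂_{θ_j}: left contraction with the j-th dual basis vector. -/
def dθ {n : ℕ} (j : Fin (2*n)) : Λ n →ₗ[ℝ] Λ n :=
  CliffordAlgebra.contractLeft (LinearMap.proj j)

/-- The 0-based index of θ_{2j-1} (1-based), for j = 1,…,n. -/
def e2 {n : ℕ} (j : Fin n) : Fin (2*n) := ⟨2*j.val, by omega⟩
/-- The 0-based index of θ_{2j} (1-based), for j = 1,…,n. -/
def o2 {n : ℕ} (j : Fin n) : Fin (2*n) := ⟨2*j.val+1, by omega⟩

/-- The fermionic Laplacian Δ_f = 4 Σ_{j=1}^n ∂_{θ_{2j-1}} ∂_{θ_{2j}}. -/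
def Δf (n : ℕ) : Λ n →ₗ[ℝ] Λ n :=
  (4:ℝ) • ∑ j : Fin n, dθ (e2 j) ∘ₗ dθ (o2 j)

/-- The Berezin integral ∫_B = ∂_{θ_{2n}} ∘ ⋯ ∘ ∂_{θ_1}. -/
def berezin (n : ℕ) : Λ n →ₗ[ℝ] Λ n :=
  (List.ofFn (fun j : Fin (2*n) => dθ j)).foldl (fun acc f => f ∘ₗ acc) LinearMap.id

/-- ℕ-indexed extension of the contraction operators. -/
def dext (n : ℕ) (j : ℕ) : Λ n →ₗ[ℝ] Λ n := if h : j < 2*n then dθ ⟨j, h⟩ else 0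

lemma dext_anti (n : ℕ) (i j : ℕ) :
    dext n i * dext n j = -(dext n j * dext n i) := by
  by_cases hi : i < 2*n
  · by_cases hj : j < 2*n
    · rw [dext, dext, dif_pos hi, dif_pos hj]
      refine LinearMap.ext fun x => ?_
      simp only [Module.End.mul_apply, LinearMap.neg_apply, dθ]
      exact CliffordAlgebra.contractLeft_comm _ _ x
    · rw [dext, dext, dif_pos hi, dif_neg hj, mul_zero, zero_mul, neg_zero]
  · rw [dext, dif_neg hi, mul_zero, zero_mul, neg_zero]

lemma dext_sq (n : ℕ) (i : ℕ) : dext n i * dext n i = 0 := by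
  by_cases hi : i < 2*n
  · rw [dext, dif_pos hi]
    refine LinearMap.ext fun x => ?_
    simp only [Module.End.mul_apply, LinearMap.zero_apply, dθ]
    exact CliffordAlgebra.contractLeft_contractLeft _ x
  · rw [dext, dif_neg hi, mul_zero]

/-- The paired operators. -/
def Dop (n : ℕ) (j : ℕ) : Λ n →ₗ[ℝ] Λ n := dext n (2*j) * dext n (2*j+1)

lemma dext_mul_comm (n : ℕ) (m a b : ℕ) : Commute (dext n m) (dext n a * dext n b) := by
  show dext n m * (dext n a * dext n b) = (dext n a * dext n b) * dext n m
  rw [← mul_assoc, dext_anti n m a, neg_mul (α := Module.End ℝ (Λ n)), mul_assoc, dext_anti n m b, mul_neg (α := Module.End ℝ (Λ n)),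
    neg_neg, ← mul_assoc]

lemma Dop_comm (n : ℕ) (i j : ℕ) : Commute (Dop n i) (Dop n j) :=
  Commute.mul_left (dext_mul_comm n (2*i) (2*j) (2*j+1))
    (dext_mul_comm n (2*i+1) (2*j) (2*j+1))

lemma Dop_sq (n : ℕ) (i : ℕ) : Dop n i * Dop n i = 0 := by
  rw [Dop, mul_assoc, ← mul_assoc (dext n (2*i+1)), dext_anti n (2*i+1) (2*i), neg_mul (α := Module.End ℝ (Λ n)),
    mul_neg (α := Module.End ℝ (Λ n)), ← mul_assoc, ← mul_assoc, dext_sq, zero_mul, zero_mul, neg_zero]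

theorem berezin_eq_smul_pow_fermionicLaplacian (n : ℕ) :
    berezin n = (((-1:ℝ)^n) / (4^n * (n.factorial : ℝ))) • ((Δf n) ^ n : Λ n →ₗ[ℝ] Λ n) := by
  classical
  -- berezin as a reversed product
  have hofn : List.ofFn (fun j : Fin (2*n) => dθ j) = (List.range (2*n)).map (dext n) := by
    apply List.ext_getElem
    · simp
    · intro i h1 h2
      simp only [List.getElem_ofFn, List.getElem_map, List.getElem_range]
      have hi : i < 2*n := by simpa using h1
      rw [dext, dif_pos hi]
  have hb : berezin n = (((List.range (2*n)).map (dext n)).reverse).prod := by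
    show (List.ofFn (fun j : Fin (2*n) => dθ j)).foldl (fun acc f => f * acc) 1
      = (((List.range (2*n)).map (dext n)).reverse).prod
    rw [foldl_mul_eq, mul_one, hofn]
  -- sign computation
  have hchoose : ((-1:ℝ))^((2*n).choose 2) = (-1:ℝ)^n := by
    have h2 : (2*n).choose 2 = n*(2*n-1) := by
      rw [Nat.choose_two_right]
      have h3 : 2*n*(2*n-1) = (n*(2*n-1))*2 := by ring
      rw [h3, Nat.mul_div_cancel _ (by norm_num)]
    rw [h2]
    rcases Nat.even_or_odd n with h | h
    · rw [(h.mul_right _).neg_one_pow, h.neg_one_pow]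
    · have hodd : Odd (n*(2*n-1)) := by
        refine h.mul ⟨n-1, ?_⟩
        have : 1 ≤ n := h.pos
        omega
      rw [hodd.neg_one_pow, h.neg_one_pow]
  -- the Laplacian as a scaled sum
  have hΔ : Δf n = (4:ℝ) • (∑ j ∈ Finset.range n, Dop n j) := by
    rw [Δf]
    congr 1
    rw [← Fin.sum_univ_eq_sum_range (fun j => Dop n j) n]
    apply Finset.sum_congr rfl
    intro j _
    have h1 : 2*j.val < 2*n := by omega
    have h2 : 2*j.val+1 < 2*n := by omega
    show dθ (e2 j) ∘ₗ dθ (o2 j) = Dop n j.val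
    rw [Dop, dext, dext, dif_pos h1, dif_pos h2]
    rfl
  have hPD : ∀ k : ℕ, ((List.range k).map (Dop n)).prod
      = ((List.range (2*k)).map (dext n)).prod := by
    intro k
    induction k with
    | zero => simp
    | succ k ih =>
        rw [List.range_succ, show 2*(k+1) = 2*k+1+1 from by ring, List.range_succ,
          List.range_succ]
        simp only [List.map_append, List.prod_append, List.map_cons, List.map_nil,
          List.prod_cons, List.prod_nil, mul_one, ih]
        rw [Dop, mul_assoc]
  have hS := sum_pow_eq (Dop n) (Dop_comm n) (Dop_sq n) n
  rw [hb, reverse_prod (dext n) (dext_anti n) (2*n), hchoose, hΔ, smul_pow, hS, hPD,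
    ← Nat.cast_smul_eq_nsmul ℝ, smul_smul, smul_smul]
  congr 1
  have h4 : (4:ℝ)^n * (n.factorial : ℝ) ≠ 0 := by positivity
  field_simp

end SuperCauchy
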